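/- Let f_0 : ℝ^{2Nd} → ℝ be f_0(x) = Σ_{i=1}^N G(x[i], x[N+i]) where x = (x[1],...,x[2N]) with x[i] ∈ ℝ^d and G : ℝ^d × ℝ^d → ℝ is differentiable and L_f-smooth. Let X = {x : x[1] = ... = x[2N]} and for x define x̄ = (1/2N)Σ_{i=1}^{2N} x[i] and g(v) = G(v,v). Then L_f ‖x - P_X(x - (1/(2L_f))∇f_0(x))‖ ≥ (√N/4) ‖∇g(x̄)‖, where P_X denotes Euclidean projection onto X. -/

import Mathlib

open Real

noncomputable def precompCLM {α β : Type*} [Fintype α] [Fintype β] (σ : β → α) :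
    EuclideanSpace ℝ α →L[ℝ] EuclideanSpace ℝ β :=
  LinearMap.toContinuousLinearMap
    { toFun := fun z => WithLp.toLp 2 (fun j => z (σ j))
      map_add' := fun _ _ => rfl
      map_smul' := fun _ _ => rfl }

@[simp] lemma precompCLM_apply {α β : Type*} [Fintype α] [Fintype β] (σ : β → α)
    (z : EuclideanSpace ℝ α) (j : β) : precompCLM σ z j = z (σ j) := rfl

lemma euclid_norm_sq {ι : Type*} [Fintype ι] (w : EuclideanSpace ℝ ι) :
    ‖w‖ ^ 2 = ∑ i, (w i) ^ 2 := by
  rw [EuclideanSpace.norm_eq, Real.sq_sqrt (by positivity)]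
  simp [Real.norm_eq_abs, sq_abs]

lemma euclid_sum_apply {ι κ : Type*} [Fintype ι] (s : Finset κ)
    (f : κ → EuclideanSpace ℝ ι) (j : ι) :
    (∑ k ∈ s, f k) j = ∑ k ∈ s, f k j := by
  induction s using Finset.cons_induction with
  | empty => rfl
  | cons a s ha ih => rw [Finset.sum_cons, Finset.sum_cons, PiLp.add_apply, ih]

lemma grad_coord {ι : Type*} [Fintype ι] [DecidableEq ι] (f : EuclideanSpace ℝ ι → ℝ)
    (x : EuclideanSpace ℝ ι) (p : ι) :
    gradient f x p = fderiv ℝ f x (EuclideanSpace.single p 1) := by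
  have h : (inner ℝ (gradient f x) (EuclideanSpace.single p 1) : ℝ)
      = fderiv ℝ f x (EuclideanSpace.single p 1) := by
    rw [gradient]; exact InnerProductSpace.toDual_symm_apply
  rw [← h, real_inner_comm, EuclideanSpace.inner_single_left]
  simp

noncomputable def sumGrad {d : ℕ} (G : EuclideanSpace ℝ (Fin d ⊕ Fin d) → ℝ)
    (w : EuclideanSpace ℝ (Fin d ⊕ Fin d)) : EuclideanSpace ℝ (Fin d) :=
  WithLp.toLp 2 (fun j => gradient G w (Sum.inl j) + gradient G w (Sum.inr j))

@[simp] lemma sumGrad_apply {d : ℕ} (G : EuclideanSpace ℝ (Fin d ⊕ Fin d) → ℝ)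
    (w : EuclideanSpace ℝ (Fin d ⊕ Fin d)) (j : Fin d) :
    sumGrad G w j = gradient G w (Sum.inl j) + gradient G w (Sum.inr j) := rfl

lemma sumGrad_lip {d : ℕ} (G : EuclideanSpace ℝ (Fin d ⊕ Fin d) → ℝ)
    (w w' : EuclideanSpace ℝ (Fin d ⊕ Fin d)) :
    ‖sumGrad G w - sumGrad G w'‖ ≤ Real.sqrt 2 * ‖gradient G w - gradient G w'‖ := by
  have h1 : ‖sumGrad G w - sumGrad G w'‖ ^ 2 ≤ 2 * ‖gradient G w - gradient G w'‖ ^ 2 := by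
    rw [euclid_norm_sq, euclid_norm_sq, Fintype.sum_sum_type, mul_add,
      Finset.mul_sum, Finset.mul_sum, ← Finset.sum_add_distrib]
    apply Finset.sum_le_sum
    intro j _
    simp only [PiLp.sub_apply, sumGrad_apply]
    nlinarith [sq_nonneg ((gradient G w (Sum.inl j) - gradient G w' (Sum.inl j))
      - (gradient G w (Sum.inr j) - gradient G w' (Sum.inr j)))]
  calc ‖sumGrad G w - sumGrad G w'‖
      = Real.sqrt (‖sumGrad G w - sumGrad G w'‖ ^ 2) := (Real.sqrt_sq (norm_nonneg _)).symm
    _ ≤ Real.sqrt (2 * ‖gradient G w - gradient G w'‖ ^ 2) := Real.sqrt_le_sqrt h1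
    _ = Real.sqrt 2 * ‖gradient G w - gradient G w'‖ := by
        rw [Real.sqrt_mul (by norm_num), Real.sqrt_sq (norm_nonneg _)]

lemma final_numeric (Nr Lf gn W s0 a b R : ℝ) (hLf : 0 < Lf)
    (hgn : 0 ≤ gn) (hW : 0 ≤ W) (hs0 : 0 ≤ s0) (ha : 0 < a) (hb : 0 ≤ b) (hR : 0 ≤ R)
    (ha2 : a ^ 2 = Nr) (hb2 : b ^ 2 = 2)
    (h8 : 8 * (Nr * (Lf ^ 2 * R ^ 2)) = 8 * (Nr * (Lf ^ 2 * s0 ^ 2)) + W ^ 2)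
    (hm : Nr * gn ≤ W + b * Lf * (a * s0)) :
    a / 4 * gn ≤ Lf * R := by
  have am1 : (b * (Lf * (a * s0))) ^ 2 = 2 * (Nr * (Lf ^ 2 * s0 ^ 2)) := by
    have h : (b * (Lf * (a * s0))) ^ 2 = b ^ 2 * (a ^ 2 * (Lf ^ 2 * s0 ^ 2)) := by ring
    rw [h, hb2, ha2]
  have amR : (4 * (Lf * (R * a))) ^ 2 = 16 * (Nr * (Lf ^ 2 * R ^ 2)) := by
    have h : (4 * (Lf * (R * a))) ^ 2 = 16 * (a ^ 2 * (Lf ^ 2 * R ^ 2)) := by ring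
    rw [h, ha2]
  have key2 : (W + b * (Lf * (a * s0))) ^ 2 ≤ (4 * (Lf * (R * a))) ^ 2 := by
    nlinarith [sq_nonneg (b * (Lf * (a * s0)) - W), am1, amR, h8]
  have key : W + b * (Lf * (a * s0)) ≤ 4 * (Lf * (R * a)) := by
    nlinarith [key2, hW, hs0, ha, hb, hLf, hR,
      mul_nonneg (mul_nonneg hb hLf.le) (mul_nonneg ha.le hs0),
      mul_nonneg (mul_nonneg (by norm_num : (0:ℝ) ≤ 4) hLf.le) (mul_nonneg hR ha.le)]
  have hmain' : Nr * gn ≤ 4 * (Lf * (R * a)) := by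
    calc Nr * gn ≤ W + b * Lf * (a * s0) := hm
      _ = W + b * (Lf * (a * s0)) := by ring
      _ ≤ 4 * (Lf * (R * a)) := key
  nlinarith [hmain', ha2, ha, hgn, mul_pos ha ha]

theorem subopt_lower_bound_via_average
    (N d : ℕ) (hN : 0 < N) (hd : 0 < d) (Lf : ℝ) (hLf : 0 < Lf)
    (G : EuclideanSpace ℝ (Fin d ⊕ Fin d) → ℝ)
    (hGdiff : Differentiable ℝ G)
    (hGsmooth : ∀ w w', ‖gradient G w - gradient G w'‖ ≤ Lf * ‖w - w'‖)
    (x : EuclideanSpace ℝ (Fin (2 * N) × Fin d))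
    (f₀ : EuclideanSpace ℝ (Fin (2 * N) × Fin d) → ℝ)
    (hf₀ : ∀ z, f₀ z = ∑ i : Fin N,
      G (WithLp.toLp 2 (fun j => Sum.elim
          (fun s => z (⟨(i : ℕ), by have := i.isLt; omega⟩, s))
          (fun s => z (⟨N + (i : ℕ), by have := i.isLt; omega⟩, s)) j)))
    (proj : EuclideanSpace ℝ (Fin (2 * N) × Fin d) → EuclideanSpace ℝ (Fin (2 * N) × Fin d))
    (hproj : ∀ z p, proj z p = (∑ k : Fin (2 * N), z (k, p.2)) / (2 * N))
    (xbar : EuclideanSpace ℝ (Fin d))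
    (hxbar : ∀ j, xbar j = (∑ k : Fin (2 * N), x (k, j)) / (2 * N))
    (g : EuclideanSpace ℝ (Fin d) → ℝ)
    (hg : ∀ v, g v = G (WithLp.toLp 2 (fun j => Sum.elim (fun s => v s) (fun s => v s) j))) :
    Real.sqrt N / 4 * ‖gradient g xbar‖ ≤
      Lf * ‖x - proj (x - (1 / (2 * Lf)) • gradient f₀ x)‖ := by
  set c : ℝ := 1 / (2 * Lf) with hc
  -- the selection maps
  set σ : Fin N → (Fin d ⊕ Fin d) → Fin (2 * N) × Fin d :=
    fun i => Sum.elim (fun s => (⟨(i : ℕ), by omega⟩, s)) (fun s => (⟨N + (i : ℕ), by omega⟩, s))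
    with hσ
  set T : Fin N → (EuclideanSpace ℝ (Fin (2 * N) × Fin d) →L[ℝ]
      EuclideanSpace ℝ (Fin d ⊕ Fin d)) := fun i => precompCLM (σ i) with hT
  set Dc : EuclideanSpace ℝ (Fin d) →L[ℝ] EuclideanSpace ℝ (Fin d ⊕ Fin d) :=
    precompCLM (Sum.elim (id : Fin d → Fin d) id) with hDc
  have hf0eq : f₀ = fun z => ∑ i : Fin N, G (T i z) := by
    funext z
    rw [hf₀ z]
    refine Finset.sum_congr rfl fun i _ => ?_
    congr 1
    ext j
    cases j <;> rfl
  have hgeq : g = fun v => G (Dc v) := by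
    funext v
    rw [hg v]
    congr 1
    ext j
    cases j <;> rfl
  have hF : HasFDerivAt f₀ (∑ i : Fin N, (fderiv ℝ G (T i x)).comp (T i)) x := by
    rw [hf0eq]
    exact HasFDerivAt.fun_sum fun i _ =>
      ((hGdiff (T i x)).hasFDerivAt.comp x (T i).hasFDerivAt)
  have hFg : HasFDerivAt g ((fderiv ℝ G (Dc xbar)).comp Dc) xbar := by
    rw [hgeq]
    exact (hGdiff (Dc xbar)).hasFDerivAt.comp xbar Dc.hasFDerivAt
  -- single-vector computations
  have hDsingle : ∀ j : Fin d, Dc (EuclideanSpace.single j 1)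
      = EuclideanSpace.single (Sum.inl j) 1 + EuclideanSpace.single (Sum.inr j) 1 := by
    intro j
    ext q
    cases q with
    | inl s => simp [hDc, PiLp.add_apply, EuclideanSpace.single_apply]
    | inr s => simp [hDc, PiLp.add_apply, EuclideanSpace.single_apply]
  have hgrad_g : gradient g xbar = sumGrad G (Dc xbar) := by
    ext j
    rw [grad_coord, hFg.fderiv, ContinuousLinearMap.comp_apply, hDsingle, map_add,
      sumGrad_apply, grad_coord, grad_coord]
  have hgradf0 : ∀ p : Fin (2 * N) × Fin d, gradient f₀ x p
      = ∑ i : Fin N, fderiv ℝ G ((T i) x) ((T i) (EuclideanSpace.single p 1)) := by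
    intro p
    rw [grad_coord, hF.fderiv]
    simp [ContinuousLinearMap.sum_apply]
  have hTsingle : ∀ (i : Fin N) (j : Fin d),
      (∑ k : Fin (2 * N), (T i) (EuclideanSpace.single (k, j) 1))
        = EuclideanSpace.single (Sum.inl j) 1 + EuclideanSpace.single (Sum.inr j) 1 := by
    intro i j
    ext q
    rw [euclid_sum_apply]
    cases q with
    | inl s =>
      simp [hT, hσ, EuclideanSpace.single_apply, PiLp.add_apply, Prod.ext_iff,
        ite_and, Finset.sum_ite_eq, Finset.sum_ite_eq']
    | inr s =>
      simp [hT, hσ, EuclideanSpace.single_apply, PiLp.add_apply, Prod.ext_iff,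
        ite_and, Finset.sum_ite_eq, Finset.sum_ite_eq']
  have hcol : ∀ j : Fin d, (∑ k : Fin (2 * N), gradient f₀ x (k, j))
      = ∑ i : Fin N, sumGrad G ((T i) x) j := by
    intro j
    calc (∑ k : Fin (2 * N), gradient f₀ x (k, j))
        = ∑ k : Fin (2 * N), ∑ i : Fin N,
            fderiv ℝ G ((T i) x) ((T i) (EuclideanSpace.single (k, j) 1)) :=
          Finset.sum_congr rfl fun k _ => hgradf0 (k, j)
      _ = ∑ i : Fin N, ∑ k : Fin (2 * N),
            fderiv ℝ G ((T i) x) ((T i) (EuclideanSpace.single (k, j) 1)) := Finset.sum_comm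
      _ = ∑ i : Fin N, fderiv ℝ G ((T i) x)
            (∑ k : Fin (2 * N), (T i) (EuclideanSpace.single (k, j) 1)) := by
          exact Finset.sum_congr rfl fun i _ => (map_sum _ _ _).symm
      _ = ∑ i : Fin N, sumGrad G ((T i) x) j := by
          refine Finset.sum_congr rfl fun i _ => ?_
          rw [hTsingle i j, map_add, sumGrad_apply, grad_coord, grad_coord]
  set S : ℝ := ∑ p : Fin (2 * N) × Fin d, (x p - xbar p.2) ^ 2 with hS
  set w : EuclideanSpace ℝ (Fin d) := ∑ i : Fin N, sumGrad G ((T i) x) with hw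
  have hwj : ∀ j, w j = ∑ i : Fin N, sumGrad G ((T i) x) j := fun j => euclid_sum_apply _ _ _
  have hN' : ((N : ℝ)) ≠ 0 := Nat.cast_ne_zero.mpr hN.ne'
  have h2N : (2 * (N : ℝ)) ≠ 0 := by positivity
  have hxs : ∀ j, ∑ k : Fin (2 * N), x (k, j) = 2 * N * xbar j := by
    intro j; rw [hxbar j]; field_simp
  have hcoord : ∀ p, (x - proj (x - c • gradient f₀ x)) p
      = (x p - xbar p.2) + c / (2 * N) * w p.2 := by
    intro p
    rw [PiLp.sub_apply, hproj]
    have h1 : ∑ k : Fin (2 * N), (x - c • gradient f₀ x) (k, p.2)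
        = 2 * N * xbar p.2 - c * w p.2 := by
      simp only [PiLp.sub_apply, PiLp.smul_apply, smul_eq_mul]
      rw [Finset.sum_sub_distrib, ← Finset.mul_sum, hcol p.2, hxs p.2, hwj]
    rw [h1]
    field_simp
    ring
  have hSnonneg : 0 ≤ S := Finset.sum_nonneg fun p _ => sq_nonneg _
  have hR2 : ‖x - proj (x - c • gradient f₀ x)‖ ^ 2 = S + c ^ 2 / (2 * N) * ‖w‖ ^ 2 := by
    rw [euclid_norm_sq]
    calc ∑ p : Fin (2 * N) × Fin d, ((x - proj (x - c • gradient f₀ x)) p) ^ 2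
        = ∑ p : Fin (2 * N) × Fin d, ((x p - xbar p.2) + c / (2 * N) * w p.2) ^ 2 :=
          Finset.sum_congr rfl fun p _ => by rw [hcoord p]
      _ = (∑ p : Fin (2 * N) × Fin d, (x p - xbar p.2) ^ 2)
          + (2 * (c / (2 * N))) * ∑ p : Fin (2 * N) × Fin d, (x p - xbar p.2) * w p.2
          + (c / (2 * N)) ^ 2 * ∑ p : Fin (2 * N) × Fin d, (w p.2) ^ 2 := by
          rw [Finset.mul_sum, Finset.mul_sum, ← Finset.sum_add_distrib, ← Finset.sum_add_distrib]
          exact Finset.sum_congr rfl fun p _ => by ring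
      _ = S + c ^ 2 / (2 * N) * ‖w‖ ^ 2 := by
          have hcross : ∑ p : Fin (2 * N) × Fin d, (x p - xbar p.2) * w p.2 = 0 := by
            rw [Fintype.sum_prod_type, Finset.sum_comm]
            refine Finset.sum_eq_zero fun j _ => ?_
            dsimp only
            rw [← Finset.sum_mul, Finset.sum_sub_distrib, hxs j, Finset.sum_const]
            simp
          have hwsum : ∑ p : Fin (2 * N) × Fin d, (w p.2) ^ 2 = 2 * N * ‖w‖ ^ 2 := by
            rw [Fintype.sum_prod_type, euclid_norm_sq]
            dsimp only
            rw [Finset.sum_const]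
            simp only [Finset.card_univ, Fintype.card_fin, nsmul_eq_mul]
            push_cast
            ring
          rw [hcross, hwsum]
          field_simp
          ring
  have hsplit : ∀ h : Fin (2 * N) → ℝ, (∑ k : Fin (2 * N), h k)
      = ∑ i : Fin N, (h ⟨(i : ℕ), by omega⟩ + h ⟨N + (i : ℕ), by omega⟩) := by
    intro h
    rw [← Equiv.sum_comp (finSumFinEquiv.trans (finCongr (two_mul N).symm)) h,
      Fintype.sum_sum_type, ← Finset.sum_add_distrib]
    refine Finset.sum_congr rfl fun i _ => ?_
    congr 2 <;> · apply Fin.ext; simp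
  set t : Fin N → ℝ := fun i => ‖Dc xbar - (T i) x‖ with ht
  have hti : ∀ i : Fin N, (t i) ^ 2
      = (∑ s : Fin d, (x (⟨(i : ℕ), by omega⟩, s) - xbar s) ^ 2)
        + (∑ s : Fin d, (x (⟨N + (i : ℕ), by omega⟩, s) - xbar s) ^ 2) := by
    intro i
    rw [ht]
    dsimp only
    rw [euclid_norm_sq, Fintype.sum_sum_type]
    congr 1 <;> refine Finset.sum_congr rfl fun s _ => ?_ <;>
      · simp only [PiLp.sub_apply, hDc, hT, hσ, precompCLM_apply, Sum.elim_inl, Sum.elim_inr,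
          id_eq]
        ring
  have htsq : ∑ i : Fin N, (t i) ^ 2 = S := by
    have hSsplit : S = ∑ i : Fin N, ((∑ s : Fin d, (x (⟨(i : ℕ), by omega⟩, s) - xbar s) ^ 2)
        + (∑ s : Fin d, (x (⟨N + (i : ℕ), by omega⟩, s) - xbar s) ^ 2)) := by
      rw [hS, Fintype.sum_prod_type]
      exact hsplit (fun k => ∑ s : Fin d, (x (k, s) - xbar s) ^ 2)
    rw [hSsplit]
    exact Finset.sum_congr rfl fun i _ => hti i
  have htsum : ∑ i : Fin N, t i ≤ Real.sqrt N * Real.sqrt S := by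
    have h1 : (∑ i : Fin N, t i) ^ 2 ≤ N * S := by
      have h2 := sq_sum_le_card_mul_sum_sq (s := (Finset.univ : Finset (Fin N))) (f := t)
      simpa [htsq] using h2
    calc ∑ i : Fin N, t i = Real.sqrt ((∑ i : Fin N, t i) ^ 2) :=
        (Real.sqrt_sq (Finset.sum_nonneg fun i _ => norm_nonneg _)).symm
      _ ≤ Real.sqrt (N * S) := Real.sqrt_le_sqrt h1
      _ = Real.sqrt N * Real.sqrt S := Real.sqrt_mul (Nat.cast_nonneg N) S
  have hmain : (N : ℝ) * ‖sumGrad G (Dc xbar)‖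
      ≤ ‖w‖ + Real.sqrt 2 * Lf * (Real.sqrt N * Real.sqrt S) := by
    have hvec : (N : ℝ) • sumGrad G (Dc xbar) - w
        = ∑ i : Fin N, (sumGrad G (Dc xbar) - sumGrad G ((T i) x)) := by
      rw [Finset.sum_sub_distrib, hw]
      congr 1
      rw [Finset.sum_const, Finset.card_univ, Fintype.card_fin, Nat.cast_smul_eq_nsmul]
    have h2 : (N : ℝ) * ‖sumGrad G (Dc xbar)‖ - ‖w‖
        ≤ Real.sqrt 2 * Lf * (Real.sqrt N * Real.sqrt S) := by
      calc (N : ℝ) * ‖sumGrad G (Dc xbar)‖ - ‖w‖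
          = ‖(N : ℝ) • sumGrad G (Dc xbar)‖ - ‖w‖ := by
            rw [norm_smul, Real.norm_natCast]
        _ ≤ ‖(N : ℝ) • sumGrad G (Dc xbar) - w‖ := norm_sub_norm_le _ _
        _ = ‖∑ i : Fin N, (sumGrad G (Dc xbar) - sumGrad G ((T i) x))‖ := by rw [hvec]
        _ ≤ ∑ i : Fin N, ‖sumGrad G (Dc xbar) - sumGrad G ((T i) x)‖ := norm_sum_le _ _
        _ ≤ ∑ i : Fin N, Real.sqrt 2 * Lf * t i := by
            refine Finset.sum_le_sum fun i _ => ?_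
            calc ‖sumGrad G (Dc xbar) - sumGrad G ((T i) x)‖
                ≤ Real.sqrt 2 * ‖gradient G (Dc xbar) - gradient G ((T i) x)‖ := sumGrad_lip G _ _
              _ ≤ Real.sqrt 2 * (Lf * ‖Dc xbar - (T i) x‖) :=
                  mul_le_mul_of_nonneg_left (hGsmooth _ _) (Real.sqrt_nonneg 2)
              _ = Real.sqrt 2 * Lf * t i := (mul_assoc _ _ _).symm
        _ = Real.sqrt 2 * Lf * ∑ i : Fin N, t i := (Finset.mul_sum _ _ _).symm
        _ ≤ Real.sqrt 2 * Lf * (Real.sqrt N * Real.sqrt S) :=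
            mul_le_mul_of_nonneg_left htsum (by positivity)
    linarith
  rw [hgrad_g]
  have h8 : 8 * ((N : ℝ) * (Lf ^ 2 * ‖x - proj (x - c • gradient f₀ x)‖ ^ 2))
      = 8 * ((N : ℝ) * (Lf ^ 2 * Real.sqrt S ^ 2)) + ‖w‖ ^ 2 := by
    rw [hR2, Real.sq_sqrt hSnonneg, hc]
    field_simp
    ring
  exact final_numeric N Lf _ _ _ _ _ _ hLf (norm_nonneg _) (norm_nonneg _)
    (Real.sqrt_nonneg S) (Real.sqrt_pos.mpr (by exact_mod_cast hN)) (Real.sqrt_nonneg 2)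
    (norm_nonneg _) (Real.sq_sqrt (Nat.cast_nonneg N)) (Real.sq_sqrt (by norm_num)) h8 hmain
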